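/- The computation-based encoding of vectors is correct: for all A : Type and n : ℕ, the type IMu (VecCompD A) n — where VecCompD A is defined by recursion on the index, with VecCompD A 0 = unit and VecCompD A (m+1) = sigma A (fun _ => var m) — is equivalent to Vector A n. -/

import Mathlib

inductive IDesc (I : Type) : Type 1
  | var : I → IDesc I
  | unit : IDesc I
  | times : IDesc I → IDesc I → IDesc I
  | pi : (S : Type) → (S → IDesc I) → IDesc I
  | sigma : (S : Type) → (S → IDesc I) → IDesc I

def iinterp {I : Type} : IDesc I → (I → Type) → Type
  | .var i, X => X i
  | .unit, _ => PUnit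
  | .times A B, X => iinterp A X × iinterp B X
  | .pi S T, X => ∀ s : S, iinterp (T s) X
  | .sigma S T, X => Σ s : S, iinterp (T s) X

def imap {I : Type} : (D : IDesc I) → {X Y : I → Type} → (∀ i, X i → Y i) →
    iinterp D X → iinterp D Y
  | .var i, _, _, f, x => f i x
  | .unit, _, _, _, _ => PUnit.unit
  | .times A B, _, _, f, x => (imap A f x.1, imap B f x.2)
  | .pi _ T, _, _, f, g => fun s => imap (T s) f (g s)
  | .sigma _ T, _, _, f, x => ⟨x.1, imap (T x.1) f x.2⟩

def IPos {I : Type} : (D : IDesc I) → iinterp D (fun _ => PUnit) → Type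
  | .var _, _ => PUnit
  | .unit, _ => Empty
  | .times A B, x => IPos A x.1 ⊕ IPos B x.2
  | .pi S T, g => Σ s : S, IPos (T s) (g s)
  | .sigma _ T, x => IPos (T x.1) x.2

def IIdx {I : Type} : (D : IDesc I) → (s : iinterp D (fun _ => PUnit)) → IPos D s → I
  | .var i, _, _ => i
  | .times A B, x, p =>
      match p with
      | .inl p₁ => IIdx A x.1 p₁
      | .inr p₂ => IIdx B x.2 p₂
  | .pi _ T, g, p => IIdx (T p.1) (g p.1) p.2
  | .sigma _ T, x, p => IIdx (T x.1) x.2 p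

def ishapeOf {I : Type} (D : IDesc I) {X : I → Type} (x : iinterp D X) :
    iinterp D (fun _ => PUnit) :=
  imap D (fun _ _ => PUnit.unit) x

def ipayload {I : Type} : (D : IDesc I) → {X : I → Type} → (x : iinterp D X) →
    (p : IPos D (ishapeOf D x)) → X (IIdx D (ishapeOf D x) p)
  | .var _, _, x, _ => x
  | .unit, _, _, p => p.elim
  | .times A B, _, x, p =>
      match p with
      | .inl p₁ => ipayload A x.1 p₁
      | .inr p₂ => ipayload B x.2 p₂
  | .pi _ T, _, g, p => ipayload (T p.1) (g p.1) p.2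
  | .sigma _ T, _, x, p => ipayload (T x.1) x.2 p

inductive IMu {I : Type} (R : I → IDesc I) : I → Type
  | sup : ∀ (i : I) (s : iinterp (R i) (fun _ => PUnit)),
      (∀ p : IPos (R i) s, IMu R (IIdx (R i) s p)) → IMu R i

def icon {I : Type} (R : I → IDesc I) (i : I) (d : iinterp (R i) (IMu R)) : IMu R i :=
  IMu.sup i (ishapeOf (R i) d) (ipayload (R i) d)

/-- Computation-based description of vectors, by recursion on the index. -/
def VecCompD (A : Type) : ℕ → IDesc ℕ
  | 0 => IDesc.unit
  | m + 1 => IDesc.sigma A (fun _ => IDesc.var m)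


def toVec (A : Type) : ∀ n, IMu (VecCompD A) n → List.Vector A n
  | 0, _ => List.Vector.nil
  | n+1, .sup _ s f => List.Vector.cons s.1 (toVec A n (f PUnit.unit))

def ofVec (A : Type) : ∀ n, List.Vector A n → IMu (VecCompD A) n
  | 0, _ => IMu.sup 0 PUnit.unit (fun p => p.elim)
  | n+1, v => IMu.sup (n+1) ⟨v.head, PUnit.unit⟩ (fun _ => ofVec A n v.tail)

theorem ofVec_toVec (A : Type) : ∀ n (x : IMu (VecCompD A) n), ofVec A n (toVec A n x) = x
  | 0, .sup _ s f => by
      cases s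
      simp only [ofVec]
      congr
      funext p
      exact p.elim
  | n+1, .sup _ ⟨a, u⟩ f => by
      cases u
      simp only [toVec, ofVec, List.Vector.head_cons, List.Vector.tail_cons]
      rw [ofVec_toVec A n (f PUnit.unit)]
      congr

theorem toVec_ofVec (A : Type) : ∀ n (v : List.Vector A n), toVec A n (ofVec A n v) = v
  | 0, v => by
      simp only [toVec]
      exact (List.Vector.eq_nil v).symm
  | n+1, v => by
      simp only [ofVec, toVec, toVec_ofVec A n v.tail]
      exact List.Vector.cons_head_tail v

/-- The computation-based encoding of vectors is correct. -/
theorem vecCompD_correct (A : Type) (n : ℕ) :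
    Nonempty (IMu (VecCompD A) n ≃ List.Vector A n) := by
  exact ⟨toVec A n, ofVec A n, ofVec_toVec A n, toVec_ofVec A n⟩
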